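/- arXiv:1507.07596 — 3 statements merged into one kernel-verified Lean document; each statement's English description precedes it below -/
import Mathlib

section
/- Let p ≥ 1 and let [a_1,b_1], …, [a_p,b_p] be mutually disjoint closed real intervals with a_i < b_i. For each i let ρ_i : [a_i,b_i] → ℂ be integrable and set f_i(z) := (1/(2πi)) ∫_{a_i}^{b_i} ρ_i(x)/(x − z) dx for z ∈ ℂ∖[a_i,b_i]. Let n = (n_1,…,n_p) ∈ ℕ^p, let Q be a polynomial with deg Q ≤ |n| := n_1 + ⋯ + n_p, and suppose that for each i there is a polynomial P_i such that z^{n_i+1}·(Q(z)·f_i(z) − P_i(z)) remains bounded as z → ∞. Then for each i ∈ {1,…,p} and each integer k with 0 ≤ k ≤ n_i − 1 one has ∫_{a_i}^{b_i} Q(x)·x^k·ρ_i(x) dx = 0. -/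
open Complex Filter Topology MeasureTheory intervalIntegral

namespace HermitePadeAux

variable {a b : ℝ} {g : ℝ → ℂ}

lemma abs_le_max_of_mem {x : ℝ} (hx : x ∈ Set.uIcc a b) : |x| ≤ max |a| |b| := by
  rcases Set.mem_uIcc.mp hx with ⟨h1, h2⟩ | ⟨h1, h2⟩
  · exact abs_le.2 ⟨le_trans (neg_le_neg (le_max_left _ _)) ((neg_abs_le a).trans h1),
      h2.trans ((le_abs_self b).trans (le_max_right _ _))⟩
  · exact abs_le.2 ⟨le_trans (neg_le_neg (le_max_right _ _)) ((neg_abs_le b).trans h1),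
      h2.trans ((le_abs_self a).trans (le_max_left _ _))⟩

lemma sub_ne_zero_of_norm {z : ℂ} (hz : max |a| |b| < ‖z‖) {x : ℝ}
    (hx : x ∈ Set.uIcc a b) : (x : ℂ) - z ≠ 0 := by
  rw [sub_ne_zero]
  intro h
  have : ‖z‖ ≤ max |a| |b| := by
    rw [← h, Complex.norm_real, Real.norm_eq_abs]
    exact abs_le_max_of_mem hx
  exact absurd hz (not_lt.2 this)

lemma contOn {z : ℂ} (hz : max |a| |b| < ‖z‖) :
    ContinuousOn (fun x : ℝ => ((x : ℂ) - z)⁻¹) (Set.uIcc a b) := by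
  apply ContinuousOn.inv₀
  · exact (Complex.continuous_ofReal.sub continuous_const).continuousOn
  · exact fun x hx => sub_ne_zero_of_norm hz hx

/-- The Cauchy transform of an integrable density tends to `0` at infinity. -/
lemma decay (hab : a ≤ b) (hg : IntervalIntegrable g volume a b) :
    Tendsto (fun z : ℂ => ∫ x in a..b, ((x : ℂ) - z)⁻¹ * g x)
      (Bornology.cobounded ℂ) (𝓝 0) := by
  set M := max |a| |b| with hM
  have key : ∀ z : ℂ, M + 1 ≤ ‖z‖ →
      ‖∫ x in a..b, ((x : ℂ) - z)⁻¹ * g x‖ ≤ (∫ x in a..b, ‖g x‖) * (‖z‖ - M)⁻¹ := by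
    intro z hz
    have hzM : M < ‖z‖ := by linarith
    have hpos : (0 : ℝ) < ‖z‖ - M := by linarith
    have int1 : IntervalIntegrable (fun x : ℝ => ((x : ℂ) - z)⁻¹ * g x) volume a b :=
      hg.continuousOn_mul (contOn hzM)
    calc ‖∫ x in a..b, ((x : ℂ) - z)⁻¹ * g x‖
        ≤ ∫ x in a..b, ‖((x : ℂ) - z)⁻¹ * g x‖ := norm_integral_le_integral_norm hab
      _ ≤ ∫ x in a..b, (‖z‖ - M)⁻¹ * ‖g x‖ := by
          apply integral_mono_on hab int1.norm (hg.norm.const_mul _)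
          intro x hx
          have hxm : x ∈ Set.uIcc a b := Set.Icc_subset_uIcc hx
          have h1 : ‖z‖ - M ≤ ‖(x : ℂ) - z‖ := by
            have : ‖z‖ - ‖(x : ℂ)‖ ≤ ‖(x : ℂ) - z‖ := by
              rw [norm_sub_rev]; exact norm_sub_norm_le z _
            have hxM : ‖(x : ℂ)‖ ≤ M := by
              rw [Complex.norm_real, Real.norm_eq_abs]; exact abs_le_max_of_mem hxm
            linarith
          rw [norm_mul, norm_inv]
          gcongr
      _ = (∫ x in a..b, ‖g x‖) * (‖z‖ - M)⁻¹ := by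
          rw [intervalIntegral.integral_const_mul, mul_comm]
  have h1 : Tendsto (fun z : ℂ => (∫ x in a..b, ‖g x‖) * (‖z‖ - M)⁻¹)
      (Bornology.cobounded ℂ) (𝓝 0) := by
    have h2 : Tendsto (fun z : ℂ => (‖z‖ - M)⁻¹) (Bornology.cobounded ℂ) (𝓝 0) := by
      apply Tendsto.inv_tendsto_atTop
      exact tendsto_atTop_add_const_right _ (-M)
        tendsto_norm_cobounded_atTop |>.congr fun z => by ring
    simpa using h2.const_mul (∫ x in a..b, ‖g x‖)
  exact squeeze_zero_norm'
    ((eventually_cobounded_le_norm (M + 1)).mono fun z hz => key z hz) h1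

/-- The shift identity `z/(x-z) = x/(x-z) - 1` integrated against a density. -/
lemma shift (hg : IntervalIntegrable g volume a b) {z : ℂ} (hz : max |a| |b| < ‖z‖) :
    z * ∫ x in a..b, ((x : ℂ) - z)⁻¹ * g x
      = (∫ x in a..b, ((x : ℂ) - z)⁻¹ * ((x : ℂ) * g x)) - ∫ x in a..b, g x := by
  have int1 : IntervalIntegrable (fun x : ℝ => ((x : ℂ) - z)⁻¹ * ((x : ℂ) * g x))
      volume a b := by
    simpa only [Pi.mul_apply, mul_assoc] using
      hg.continuousOn_mul ((contOn hz).mul Complex.continuous_ofReal.continuousOn)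
  rw [← intervalIntegral.integral_const_mul, ← integral_sub int1 hg]
  apply integral_congr
  intro x hx
  have hne : (x : ℂ) - z ≠ 0 := sub_ne_zero_of_norm hz hx
  field_simp
  ring

lemma cont_poly (P : Polynomial ℂ) :
    ContinuousOn (fun x : ℝ => P.eval (x : ℂ)) (Set.uIcc a b) :=
  (P.continuous.comp Complex.continuous_ofReal).continuousOn

/-- Extraction of the polynomial part: `∫ (Q(z) - Q(x))/(x-z) ρ(x) dx` is a polynomial in `z`. -/
lemma exists_poly (hg : IntervalIntegrable g volume a b) (Q : Polynomial ℂ) :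
    ∃ T : Polynomial ℂ, ∀ z : ℂ, max |a| |b| < ‖z‖ →
      (∫ x in a..b, (((x : ℂ) - z)⁻¹ * (Q.eval z - Q.eval (x : ℂ))) * g x) = T.eval z := by
  induction Q using Polynomial.induction_on with
  | C c =>
      refine ⟨0, fun z hz => ?_⟩
      simp
  | add P R ihP ihR =>
      obtain ⟨TP, hTP⟩ := ihP
      obtain ⟨TR, hTR⟩ := ihR
      have intP : ∀ z : ℂ, max |a| |b| < ‖z‖ → IntervalIntegrable
          (fun x : ℝ => (((x : ℂ) - z)⁻¹ * (P.eval z - P.eval (x : ℂ))) * g x) volume a b :=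
        fun z hz => hg.continuousOn_mul
          ((contOn hz).mul (continuousOn_const.sub (cont_poly P)))
      have intR : ∀ z : ℂ, max |a| |b| < ‖z‖ → IntervalIntegrable
          (fun x : ℝ => (((x : ℂ) - z)⁻¹ * (R.eval z - R.eval (x : ℂ))) * g x) volume a b :=
        fun z hz => hg.continuousOn_mul
          ((contOn hz).mul (continuousOn_const.sub (cont_poly R)))
      refine ⟨TP + TR, fun z hz => ?_⟩
      have hEq : Set.EqOn
          (fun x : ℝ => (((x : ℂ) - z)⁻¹ * ((P + R).eval z - (P + R).eval (x : ℂ))) * g x)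
          (fun x : ℝ => (((x : ℂ) - z)⁻¹ * (P.eval z - P.eval (x : ℂ))) * g x
            + (((x : ℂ) - z)⁻¹ * (R.eval z - R.eval (x : ℂ))) * g x)
          (Set.uIcc a b) := by
        intro x hx
        simp only [Polynomial.eval_add]
        ring
      rw [integral_congr hEq, integral_add (intP z hz) (intR z hz), hTP z hz, hTR z hz,
        Polynomial.eval_add]
  | monomial m c ih =>
      obtain ⟨T, hT⟩ := ih
      refine ⟨Polynomial.X * T
        - Polynomial.C (c * ∫ x in a..b, (x : ℂ) ^ m * g x), fun z hz => ?_⟩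
      have intprev : IntervalIntegrable
          (fun x : ℝ => (((x : ℂ) - z)⁻¹ * ((Polynomial.C c * Polynomial.X ^ m).eval z
            - (Polynomial.C c * Polynomial.X ^ m).eval (x : ℂ))) * g x) volume a b :=
        hg.continuousOn_mul ((contOn hz).mul (continuousOn_const.sub
          (cont_poly (Polynomial.C c * Polynomial.X ^ m))))
      have intM : IntervalIntegrable (fun x : ℝ => c * ((x : ℂ) ^ m * g x)) volume a b :=
        (hg.continuousOn_mul
          ((Complex.continuous_ofReal.pow m).continuousOn)).const_mul c
      have hEq : Set.EqOn
          (fun x : ℝ => (((x : ℂ) - z)⁻¹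
            * ((Polynomial.C c * Polynomial.X ^ (m + 1)).eval z
              - (Polynomial.C c * Polynomial.X ^ (m + 1)).eval (x : ℂ))) * g x)
          (fun x : ℝ => z * ((((x : ℂ) - z)⁻¹
            * ((Polynomial.C c * Polynomial.X ^ m).eval z
              - (Polynomial.C c * Polynomial.X ^ m).eval (x : ℂ))) * g x)
            - c * ((x : ℂ) ^ m * g x)) (Set.uIcc a b) := by
        intro x hx
        have hne : (x : ℂ) - z ≠ 0 := sub_ne_zero_of_norm hz hx
        simp only [Polynomial.eval_mul, Polynomial.eval_pow, Polynomial.eval_C,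
          Polynomial.eval_X]
        field_simp
        ring
      rw [integral_congr hEq, integral_sub (intprev.const_mul z) intM,
        intervalIntegral.integral_const_mul, intervalIntegral.integral_const_mul, hT z hz]
      simp [Polynomial.eval_mul, Polynomial.eval_sub]

/-- A polynomial whose values tend to `0` at infinity is the zero polynomial. -/
lemma poly_eq_zero_of_tendsto {W : Polynomial ℂ}
    (h : Tendsto (fun z => W.eval z) (Bornology.cobounded ℂ) (𝓝 0)) : W = 0 := by
  rcases le_or_gt W.degree 0 with hdeg | hdeg
  · have hW : W = Polynomial.C (W.coeff 0) := Polynomial.eq_C_of_degree_le_zero hdeg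
    have h0 : W.coeff 0 = 0 :=
      tendsto_nhds_unique (tendsto_const_nhds (α := ℂ) (f := Bornology.cobounded ℂ))
        (h.congr fun z => by rw [hW]; simp)
    rw [hW, h0, map_zero]
  · exfalso
    have h1 : Tendsto (fun z : ℂ => ‖W.eval z‖) (Bornology.cobounded ℂ) atTop :=
      W.tendsto_norm_atTop hdeg tendsto_norm_cobounded_atTop
    exact not_tendsto_nhds_of_tendsto_atTop h1 0 (by simpa using h.norm)

/-- The iterated Cauchy transforms. -/
noncomputable def G (a b : ℝ) (g : ℝ → ℂ) (j : ℕ) (z : ℂ) : ℂ :=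
  ∫ x in a..b, ((x : ℂ) - z)⁻¹ * ((x : ℂ) ^ j * g x)

/-- The moments. -/
noncomputable def mom (a b : ℝ) (g : ℝ → ℂ) (j : ℕ) : ℂ :=
  ∫ x in a..b, (x : ℂ) ^ j * g x

lemma G_def (j : ℕ) (z : ℂ) :
    G a b g j z = ∫ x in a..b, ((x : ℂ) - z)⁻¹ * ((x : ℂ) ^ j * g x) := rfl

lemma mom_def (j : ℕ) : mom a b g j = ∫ x in a..b, (x : ℂ) ^ j * g x := rfl

end HermitePadeAux

/-- The denominator of a Hermite–Padé approximant to a vector of Cauchy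
transforms of integrable densities on mutually disjoint intervals satisfies the multiple
(non-Hermitian) orthogonality relations. -/
theorem hermitePade_orthogonality (p : ℕ) (hp : 1 ≤ p)
    (a b : Fin p → ℝ) (hab : ∀ i, a i < b i)
    (hdisj : ∀ i j, i ≠ j → Disjoint (Set.Icc (a i) (b i)) (Set.Icc (a j) (b j)))
    (ρ : Fin p → ℝ → ℂ)
    (hρ : ∀ i, IntervalIntegrable (ρ i) volume (a i) (b i))
    (f : Fin p → ℂ → ℂ)
    (hf : ∀ i, ∀ z : ℂ, z ∉ Complex.ofReal '' Set.Icc (a i) (b i) →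
      f i z = (2 * (Real.pi : ℂ) * Complex.I)⁻¹ * ∫ x in (a i)..(b i), ρ i x / ((x : ℂ) - z))
    (n : Fin p → ℕ)
    (Q : Polynomial ℂ) (hQ : Q.natDegree ≤ ∑ i, n i)
    (hHP : ∀ i, ∃ P : Polynomial ℂ, ∃ C : ℝ, ∀ᶠ z in Bornology.cobounded ℂ,
      ‖z ^ (n i + 1) * (Q.eval z * f i z - P.eval z)‖ ≤ C) :
    ∀ i, ∀ k : ℕ, k < n i →
      (∫ x in (a i)..(b i), Q.eval (x : ℂ) * (x : ℂ) ^ k * ρ i x) = 0 := by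
  open HermitePadeAux in
  intro i k hk
  set α := a i with hαdef
  set β := b i with hβdef
  have hab' : α ≤ β := (hab i).le
  set M := max |α| |β| with hMdef
  set g : ℝ → ℂ := fun x => Q.eval (x : ℂ) * ρ i x with hgdef
  have hgint : IntervalIntegrable g volume α β :=
    (hρ i).continuousOn_mul (cont_poly Q)
  set c₀ : ℂ := (2 * (Real.pi : ℂ) * Complex.I)⁻¹ with hc₀def
  have hc₀ : c₀ ≠ 0 := inv_ne_zero Complex.two_pi_I_ne_zero
  obtain ⟨P, C, hPC⟩ := hHP i
  obtain ⟨T, hT⟩ := exists_poly (g := ρ i) (hρ i) Q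
  have hgj : ∀ j : ℕ, IntervalIntegrable (fun x : ℝ => (x : ℂ) ^ j * g x) volume α β :=
    fun j => hgint.continuousOn_mul ((Complex.continuous_ofReal.pow j).continuousOn)
  -- Step 1: the key algebraic formula for `Q · f` away from the interval.
  have step1 : ∀ z : ℂ, M < ‖z‖ → Q.eval z * f i z = c₀ * (G α β g 0 z + T.eval z) := by
    intro z hz
    have hzn : z ∉ Complex.ofReal '' Set.Icc α β := by
      rintro ⟨x, hx, rfl⟩
      have hle : ‖Complex.ofReal x‖ ≤ M := by
        rw [Complex.norm_real, Real.norm_eq_abs]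
        exact abs_le_max_of_mem (Set.Icc_subset_uIcc hx)
      exact absurd hz (not_lt.2 hle)
    rw [hf i z hzn]
    have e1 : (∫ x in α..β, ρ i x / ((x : ℂ) - z))
        = ∫ x in α..β, ((x : ℂ) - z)⁻¹ * ρ i x :=
      integral_congr fun x hx => by rw [div_eq_mul_inv, mul_comm]
    rw [e1]
    have intA : IntervalIntegrable
        (fun x : ℝ => (((x : ℂ) - z)⁻¹ * (Q.eval z - Q.eval (x : ℂ))) * ρ i x) volume α β :=
      (hρ i).continuousOn_mul ((contOn hz).mul (continuousOn_const.sub (cont_poly Q)))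
    have intB : IntervalIntegrable
        (fun x : ℝ => ((x : ℂ) - z)⁻¹ * ((x : ℂ) ^ 0 * g x)) volume α β :=
      (hgj 0).continuousOn_mul (contOn hz)
    have e2 : Q.eval z * (c₀ * ∫ x in α..β, ((x : ℂ) - z)⁻¹ * ρ i x)
        = c₀ * ∫ x in α..β, Q.eval z * (((x : ℂ) - z)⁻¹ * ρ i x) := by
      rw [intervalIntegral.integral_const_mul]; ring
    rw [e2]
    congr 1
    have e3 : (∫ x in α..β, Q.eval z * (((x : ℂ) - z)⁻¹ * ρ i x))
        = ∫ x in α..β, ((((x : ℂ) - z)⁻¹ * (Q.eval z - Q.eval (x : ℂ))) * ρ i x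
            + ((x : ℂ) - z)⁻¹ * ((x : ℂ) ^ 0 * g x)) := by
      apply integral_congr
      intro x hx
      simp only [hgdef, pow_zero, one_mul]
      ring
    rw [e3, integral_add intA intB, hT z hz, G_def]
    ring
  -- Step 2: `Q·f - P` tends to zero at infinity.
  have hQfP : Tendsto (fun z => Q.eval z * f i z - P.eval z)
      (Bornology.cobounded ℂ) (𝓝 0) := by
    apply squeeze_zero_norm' (a := fun z : ℂ => C * ‖z‖⁻¹)
    · filter_upwards [hPC, eventually_cobounded_le_norm 1] with z h1 h2
      have hz0 : (0 : ℝ) < ‖z‖ := lt_of_lt_of_le one_pos h2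
      have hle : ‖Q.eval z * f i z - P.eval z‖ * ‖z‖ ≤ C := by
        calc ‖Q.eval z * f i z - P.eval z‖ * ‖z‖
            = ‖z‖ * ‖Q.eval z * f i z - P.eval z‖ := by ring
          _ ≤ ‖z‖ ^ (n i + 1) * ‖Q.eval z * f i z - P.eval z‖ := by
              gcongr
              exact le_self_pow₀ h2 (Nat.succ_ne_zero _)
          _ = ‖z ^ (n i + 1) * (Q.eval z * f i z - P.eval z)‖ := by
              rw [norm_mul, norm_pow]
          _ ≤ C := h1
      rw [show C * ‖z‖⁻¹ = C / ‖z‖ from (div_eq_mul_inv C _).symm, le_div_iff₀ hz0]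
      exact hle
    · simpa using (tendsto_norm_cobounded_atTop.inv_tendsto_atTop).const_mul C
  have hG00 : Tendsto (fun z => c₀ * G α β g 0 z) (Bornology.cobounded ℂ) (𝓝 0) := by
    have h := (decay hab' (hgj 0)).const_mul c₀
    rw [mul_zero] at h
    exact h
  -- Step 3: the polynomial `C c₀ * T - P` vanishes.
  have hWt : Tendsto (fun z => (Polynomial.C c₀ * T - P).eval z)
      (Bornology.cobounded ℂ) (𝓝 0) := by
    have h := hQfP.sub hG00
    rw [sub_zero] at h
    apply Tendsto.congr' _ h
    filter_upwards [eventually_cobounded_le_norm (M + 1)] with z hz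
    have hzM : M < ‖z‖ := lt_of_lt_of_le (lt_add_one M) hz
    rw [step1 z hzM]
    simp only [Polynomial.eval_sub, Polynomial.eval_mul, Polynomial.eval_C]
    ring
  have hW0 : Polynomial.C c₀ * T - P = 0 := poly_eq_zero_of_tendsto hWt
  have hPeq : ∀ z : ℂ, c₀ * T.eval z - P.eval z = 0 := by
    intro z
    have h := congrArg (Polynomial.eval z) hW0
    simpa using h
  -- Step 4: boundedness of `z^(n+1) G 0 z`.
  have hbd0 : ∀ᶠ z in Bornology.cobounded ℂ,
      ‖z ^ (n i + 1 - 0) * G α β g 0 z‖ ≤ C * ‖c₀⁻¹‖ := by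
    filter_upwards [hPC, eventually_cobounded_le_norm (M + 1)] with z h1 hz
    have hzM : M < ‖z‖ := lt_of_lt_of_le (lt_add_one M) hz
    have he : c₀ * G α β g 0 z = Q.eval z * f i z - P.eval z := by
      rw [step1 z hzM]
      linear_combination -hPeq z
    have he2 : z ^ (n i + 1) * G α β g 0 z
        = c₀⁻¹ * (z ^ (n i + 1) * (Q.eval z * f i z - P.eval z)) := by
      rw [← he]
      field_simp
    rw [Nat.sub_zero, he2, norm_mul, mul_comm]
    gcongr
  -- Step 5: the inductive vanishing of moments.
  have key : ∀ j : ℕ, j ≤ n i → (∀ l, l < j → mom α β g l = 0) ∧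
      ∃ D : ℝ, ∀ᶠ z in Bornology.cobounded ℂ, ‖z ^ (n i + 1 - j) * G α β g j z‖ ≤ D := by
    intro j
    induction j with
    | zero => exact fun _ => ⟨fun l hl => absurd hl (Nat.not_lt_zero l), C * ‖c₀⁻¹‖, hbd0⟩
    | succ j ih =>
      intro hj
      obtain ⟨hm, D, hD⟩ := ih (Nat.le_of_succ_le hj)
      have hexp1 : n i + 1 - j = (n i - j) + 1 := by omega
      have hexp2 : n i + 1 - (j + 1) = n i - j := by omega
      have hshift : ∀ z : ℂ, M < ‖z‖ → z * G α β g j z = G α β g (j + 1) z - mom α β g j := by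
        intro z hz
        rw [G_def, shift (hgj j) hz, G_def, mom_def]
        congr 1
        apply integral_congr
        intro x hx
        simp only [pow_succ]
        ring
      have hA : Tendsto (fun z : ℂ => z * G α β g j z) (Bornology.cobounded ℂ) (𝓝 0) := by
        apply squeeze_zero_norm' (a := fun z : ℂ => D * ‖z‖⁻¹)
        · filter_upwards [hD, eventually_cobounded_le_norm 1] with z h1 h2
          have hz0 : (0 : ℝ) < ‖z‖ := lt_of_lt_of_le one_pos h2
          have hle : ‖z * G α β g j z‖ * ‖z‖ ≤ D := by
            calc ‖z * G α β g j z‖ * ‖z‖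
                = ‖z‖ ^ 2 * ‖G α β g j z‖ := by rw [norm_mul]; ring
              _ ≤ ‖z‖ ^ (n i + 1 - j) * ‖G α β g j z‖ := by
                  gcongr
                  · omega
              _ = ‖z ^ (n i + 1 - j) * G α β g j z‖ := by rw [norm_mul, norm_pow]
              _ ≤ D := h1
          rw [show D * ‖z‖⁻¹ = D / ‖z‖ from (div_eq_mul_inv D _).symm, le_div_iff₀ hz0]
          exact hle
        · simpa using (tendsto_norm_cobounded_atTop.inv_tendsto_atTop).const_mul D
      have hGj1 : Tendsto (fun z : ℂ => G α β g (j + 1) z)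
          (Bornology.cobounded ℂ) (𝓝 0) := decay hab' (hgj (j + 1))
      have hB : Tendsto (fun z : ℂ => z * G α β g j z)
          (Bornology.cobounded ℂ) (𝓝 (0 - mom α β g j)) := by
        apply Tendsto.congr' _ (hGj1.sub tendsto_const_nhds)
        filter_upwards [eventually_cobounded_le_norm (M + 1)] with z hz
        exact (hshift z (lt_of_lt_of_le (lt_add_one M) hz)).symm
      have hm0 : mom α β g j = 0 := by
        have h0 : (0 : ℂ) = 0 - mom α β g j := tendsto_nhds_unique hA hB
        rw [zero_sub] at h0
        exact neg_eq_zero.mp h0.symm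
      refine ⟨?_, D, ?_⟩
      · intro l hl
        rcases Nat.lt_succ_iff_lt_or_eq.mp hl with h | rfl
        exacts [hm l h, hm0]
      · filter_upwards [hD, eventually_cobounded_le_norm (M + 1)] with z h1 hz
        have hzM : M < ‖z‖ := lt_of_lt_of_le (lt_add_one M) hz
        have e : z ^ (n i + 1 - (j + 1)) * G α β g (j + 1) z
            = z ^ (n i + 1 - j) * G α β g j z := by
          have h2 := hshift z hzM
          rw [hm0, sub_zero] at h2
          rw [← h2, hexp2, hexp1]
          ring
        rw [e]
        exact h1
  have hfinal := (key (n i) le_rfl).1 k hk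
  calc (∫ x in α..β, Q.eval (x : ℂ) * (x : ℂ) ^ k * ρ i x)
      = mom α β g k := by
        rw [mom_def]
        apply integral_congr
        intro x hx
        simp only [hgdef]
        ring
    _ = 0 := hfinal
end

section
/- Let p ≥ 1 and let [a_1,b_1], …, [a_p,b_p] be mutually disjoint closed real intervals with a_i < b_i. For each i let ρ_i : [a_i,b_i] → ℂ be integrable and set f_i(z) := (1/(2πi)) ∫_{a_i}^{b_i} ρ_i(x)/(x − z) dx for z ∈ ℂ∖[a_i,b_i]. Let n = (n_1,…,n_p) ∈ ℕ^p and let Q be a polynomial such that ∫_{a_i}^{b_i} Q(x)·x^k·ρ_i(x) dx = 0 for each i and each 0 ≤ k ≤ n_i − 1. Define R_i(z) := (1/(2πi)) ∫_{a_i}^{b_i} Q(x)·ρ_i(x)/(x − z) dx for z ∈ ℂ∖[a_i,b_i]. Then for each i: (1) z^{n_i+1}·R_i(z) remains bounded as z → ∞; and (2) there exists a polynomial P_i such that R_i(z) = Q(z)·f_i(z) − P_i(z) for all z ∈ ℂ∖[a_i,b_i]. -/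
open Complex Filter Topology MeasureTheory intervalIntegral Finset

private lemma hp_key1 (z : ℂ) (hz0 : z ≠ 0) (n : ℕ) (x : ℂ) (hx : x - z ≠ 0) (w : ℂ) :
    w / (x - z) = (z^(n+1))⁻¹ * (z * w * x^n / (x - z)) -
      ∑ k ∈ range n, (z^(k+1))⁻¹ * (w * x^k) := by
  have e1 := geom_sum₂_mul x z n
  have hsum : ∑ k ∈ range n, (z^(k+1))⁻¹ * (w * x^k)
      = (w * (z^n)⁻¹) * ∑ k ∈ range n, x^k * z^(n-1-k) := by
    rw [Finset.mul_sum]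
    refine Finset.sum_congr rfl fun k hk => ?_
    have hkn : k < n := Finset.mem_range.mp hk
    have hk' : z^(n - 1 - k) * z^(k+1) = z^n := by
      rw [← pow_add]; congr 1; omega
    rw [← hk', mul_inv]
    have h1 : (z:ℂ)^(k+1) ≠ 0 := pow_ne_zero _ hz0
    have h3 : (z:ℂ)^(n-1-k) ≠ 0 := pow_ne_zero _ hz0
    field_simp
  rw [hsum]
  have e2 : (∑ k ∈ range n, x^k * z^(n-1-k)) = (x^n - z^n) / (x - z) :=
    (eq_div_iff hx).mpr e1
  rw [e2]
  have h2 : (z:ℂ)^n ≠ 0 := pow_ne_zero _ hz0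
  have h4 : (z:ℂ)^(n+1) ≠ 0 := pow_ne_zero _ hz0
  field_simp
  ring

private lemma hp_key2 (Q : Polynomial ℂ) (z x : ℂ) (hx : x - z ≠ 0) :
    (Q.eval z - Q.eval x) / (x - z)
      = -∑ m ∈ range (Q.natDegree+1), Q.coeff m * ∑ j ∈ range m, z^j * x^(m-1-j) := by
  rw [div_eq_iff hx, neg_mul, Finset.sum_mul]
  have h : ∀ m ∈ range (Q.natDegree+1),
      (Q.coeff m * ∑ j ∈ range m, z^j * x^(m-1-j)) * (x - z)
        = -(Q.coeff m * z^m - Q.coeff m * x^m) := by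
    intro m _
    linear_combination (-(Q.coeff m)) * (geom_sum₂_mul z x m)
  rw [Finset.sum_congr rfl h, Finset.sum_neg_distrib, neg_neg, Finset.sum_sub_distrib,
    ← Polynomial.eval_eq_sum_range, ← Polynomial.eval_eq_sum_range]

private lemma hp_integ {A B : ℝ} (hAB : A ≤ B) {ρ : ℝ → ℂ}
    (hρ : IntervalIntegrable ρ volume A B)
    {g : ℝ → ℂ} (hg : ContinuousOn g (Set.Icc A B)) :
    IntervalIntegrable (fun x => g x * ρ x) volume A B :=
  hρ.continuousOn_mul (by rwa [Set.uIcc_of_le hAB])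

private lemma hp_ne {A B : ℝ} {z : ℂ} (hz : z ∉ Complex.ofReal '' Set.Icc A B) :
    ∀ x ∈ Set.Icc A B, ((x:ℝ):ℂ) - z ≠ 0 := by
  intro x hx h0
  exact hz ⟨x, hx, by rw [sub_eq_zero] at h0; exact h0⟩

private lemma hp_cont_inv {A B : ℝ} {z : ℂ} (hz : z ∉ Complex.ofReal '' Set.Icc A B) :
    ContinuousOn (fun x : ℝ => (((x:ℝ):ℂ) - z)⁻¹) (Set.Icc A B) :=
  ((Complex.continuous_ofReal.sub continuous_const).continuousOn).inv₀ (hp_ne hz)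

private lemma hp_integ_sum {A B : ℝ} {ι : Type*} (s : Finset ι) {f : ι → ℝ → ℂ}
    (h : ∀ i ∈ s, IntervalIntegrable (f i) volume A B) :
    IntervalIntegrable (fun x => ∑ i ∈ s, f i x) volume A B := by
  have h2 := IntervalIntegrable.sum s h
  have : (∑ i ∈ s, f i) = fun x => ∑ i ∈ s, f i x := by
    funext x; simp [Finset.sum_apply]
  rwa [this] at h2

set_option maxHeartbeats 1000000 in
private lemma hp_part2 (A B : ℝ) (hAB : A ≤ B) (ρ : ℝ → ℂ)
    (hρ : IntervalIntegrable ρ volume A B) (Q : Polynomial ℂ) :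
    ∃ P : Polynomial ℂ, ∀ z : ℂ, z ∉ Complex.ofReal '' Set.Icc A B →
      (2*(Real.pi:ℂ)*Complex.I)⁻¹ * (∫ x in A..B, Q.eval (x:ℂ) * ρ x / ((x:ℂ) - z))
        = Q.eval z * ((2*(Real.pi:ℂ)*Complex.I)⁻¹ * ∫ x in A..B, ρ x / ((x:ℂ) - z))
          - P.eval z := by
  classical
  set c : ℂ := (2*(Real.pi:ℂ)*Complex.I)⁻¹ with hc
  set N := Q.natDegree + 1 with hN
  refine ⟨-(c • ∑ m ∈ range N, ∑ j ∈ range m,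
      Polynomial.C (Q.coeff m * ∫ x in A..B, ((x:ℝ):ℂ)^(m-1-j) * ρ x) * Polynomial.X ^ j),
    fun z hz => ?_⟩
  have hne := hp_ne (A := A) (B := B) hz
  -- integrability facts
  have hIρz : IntervalIntegrable (fun x => ρ x / (((x:ℝ):ℂ) - z)) volume A B := by
    have h := hp_integ hAB hρ (hp_cont_inv hz)
    have : (fun x : ℝ => ρ x / (((x:ℝ):ℂ) - z))
        = fun x : ℝ => (((x:ℝ):ℂ) - z)⁻¹ * ρ x := by funext x; ring
    rw [this]; exact h
  have hIQρz : IntervalIntegrable (fun x => Q.eval ((x:ℝ):ℂ) * ρ x / (((x:ℝ):ℂ) - z))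
      volume A B := by
    have hg : ContinuousOn (fun x : ℝ => Q.eval ((x:ℝ):ℂ) * (((x:ℝ):ℂ) - z)⁻¹)
        (Set.Icc A B) :=
      ((Q.continuous.comp Complex.continuous_ofReal).continuousOn).mul (hp_cont_inv hz)
    have h := hp_integ hAB hρ hg
    have : (fun x : ℝ => Q.eval ((x:ℝ):ℂ) * ρ x / (((x:ℝ):ℂ) - z))
        = fun x : ℝ => (Q.eval ((x:ℝ):ℂ) * (((x:ℝ):ℂ) - z)⁻¹) * ρ x := by
      funext x; ring
    rw [this]; exact h
  have hIpow : ∀ e : ℕ, IntervalIntegrable (fun x => ((x:ℝ):ℂ)^e * ρ x) volume A B :=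
    fun e => hp_integ hAB hρ ((Complex.continuous_ofReal.pow e).continuousOn)
  -- main computation
  have hS : Q.eval z * (∫ x in A..B, ρ x / (((x:ℝ):ℂ) - z))
      - (∫ x in A..B, Q.eval ((x:ℝ):ℂ) * ρ x / (((x:ℝ):ℂ) - z))
      = ∑ m ∈ range N, ∑ j ∈ range m,
          (-(Q.coeff m * z^j)) * ∫ x in A..B, ((x:ℝ):ℂ)^(m-1-j) * ρ x := by
    rw [← intervalIntegral.integral_const_mul,
      ← intervalIntegral.integral_sub (hIρz.const_mul _) hIQρz]
    have hpt : ∀ x ∈ Set.uIcc A B,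
        Q.eval z * (ρ x / (((x:ℝ):ℂ) - z)) - Q.eval ((x:ℝ):ℂ) * ρ x / (((x:ℝ):ℂ) - z)
        = ∑ m ∈ range N, ∑ j ∈ range m,
            (-(Q.coeff m * z^j)) * (((x:ℝ):ℂ)^(m-1-j) * ρ x) := by
      intro x hx
      have h1 : ((x:ℝ):ℂ) - z ≠ 0 := hne x (by rwa [Set.uIcc_of_le hAB] at hx)
      have h2 := hp_key2 Q z ((x:ℝ):ℂ) h1
      calc Q.eval z * (ρ x / (((x:ℝ):ℂ) - z)) - Q.eval ((x:ℝ):ℂ) * ρ x / (((x:ℝ):ℂ) - z)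
          = ((Q.eval z - Q.eval ((x:ℝ):ℂ)) / (((x:ℝ):ℂ) - z)) * ρ x := by ring
        _ = (-∑ m ∈ range N, Q.coeff m * ∑ j ∈ range m, z^j * ((x:ℝ):ℂ)^(m-1-j)) * ρ x := by
            rw [h2]
        _ = ∑ m ∈ range N, ∑ j ∈ range m,
              (-(Q.coeff m * z^j)) * (((x:ℝ):ℂ)^(m-1-j) * ρ x) := by
            rw [neg_mul, Finset.sum_mul, ← Finset.sum_neg_distrib]
            refine Finset.sum_congr rfl fun m _ => ?_
            rw [mul_sum, Finset.sum_mul, ← Finset.sum_neg_distrib]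
            exact Finset.sum_congr rfl fun j _ => by ring
    rw [intervalIntegral.integral_congr hpt]
    rw [intervalIntegral.integral_finset_sum]
    · refine Finset.sum_congr rfl fun m _ => ?_
      rw [intervalIntegral.integral_finset_sum]
      · exact Finset.sum_congr rfl fun j _ => intervalIntegral.integral_const_mul _ _
      · intro j _
        exact (hIpow (m-1-j)).const_mul _
    · intro m _
      exact hp_integ_sum _ (fun j _ => (hIpow (m-1-j)).const_mul _)
  -- finish
  have hPeval : (c • ∑ m ∈ range N, ∑ j ∈ range m,
      Polynomial.C (Q.coeff m * ∫ x in A..B, ((x:ℝ):ℂ)^(m-1-j) * ρ x)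
        * Polynomial.X ^ j).eval z
      = c * ∑ m ∈ range N, ∑ j ∈ range m,
          (Q.coeff m * ∫ x in A..B, ((x:ℝ):ℂ)^(m-1-j) * ρ x) * z^j := by
    rw [Polynomial.eval_smul, smul_eq_mul]
    congr 1
    rw [Polynomial.eval_finset_sum]
    refine Finset.sum_congr rfl fun m _ => ?_
    rw [Polynomial.eval_finset_sum]
    refine Finset.sum_congr rfl fun j _ => ?_
    simp
  have hSS : (∑ m ∈ range N, ∑ j ∈ range m,
      (Q.coeff m * ∫ x in A..B, ((x:ℝ):ℂ)^(m-1-j) * ρ x) * z^j)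
      = -∑ m ∈ range N, ∑ j ∈ range m,
          (-(Q.coeff m * z^j)) * ∫ x in A..B, ((x:ℝ):ℂ)^(m-1-j) * ρ x := by
    rw [← Finset.sum_neg_distrib]
    refine Finset.sum_congr rfl fun m _ => ?_
    rw [← Finset.sum_neg_distrib]
    exact Finset.sum_congr rfl fun j _ => by ring
  rw [Polynomial.eval_neg, hPeval, hSS, mul_neg, neg_neg, ← hS]
  set u : ℂ := ∫ x in A..B, Q.eval ((x:ℝ):ℂ) * ρ x / (((x:ℝ):ℂ) - z)
  set v : ℂ := ∫ x in A..B, ρ x / (((x:ℝ):ℂ) - z)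
  ring

set_option maxHeartbeats 1000000 in
private lemma hp_part1 (A B : ℝ) (hAB : A ≤ B) (ρ : ℝ → ℂ)
    (hρ : IntervalIntegrable ρ volume A B) (Q : Polynomial ℂ) (n : ℕ)
    (horth : ∀ k : ℕ, k < n → (∫ x in A..B, Q.eval ((x:ℝ):ℂ) * ((x:ℝ):ℂ)^k * ρ x) = 0)
    (R : ℂ → ℂ)
    (hR : ∀ z : ℂ, z ∉ Complex.ofReal '' Set.Icc A B →
      R z = (2*(Real.pi:ℂ)*Complex.I)⁻¹ *
        ∫ x in A..B, Q.eval ((x:ℝ):ℂ) * ρ x / (((x:ℝ):ℂ) - z)) :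
    ∃ C : ℝ, ∀ᶠ z in Bornology.cobounded ℂ, ‖z^(n+1) * R z‖ ≤ C := by
  set c : ℂ := (2*(Real.pi:ℂ)*Complex.I)⁻¹ with hc
  set M : ℝ := max |A| |B| with hM
  have h1M : |A| ≤ M := le_max_left _ _
  have h2M : |B| ≤ M := le_max_right _ _
  have hM0 : (0:ℝ) ≤ M := le_trans (abs_nonneg A) h1M
  have hxM : ∀ x ∈ Set.Icc A B, |x| ≤ M := by
    intro x hx
    have := hx.1; have := hx.2
    have := neg_abs_le A; have := le_abs_self B
    rw [abs_le]; constructor <;> linarith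
  refine ⟨‖c‖ * ∫ x in A..B, 2 * ‖Q.eval ((x:ℝ):ℂ) * ρ x * ((x:ℝ):ℂ)^n‖, ?_⟩
  filter_upwards [tendsto_norm_cobounded_atTop.eventually_ge_atTop (2*M+1)] with z hz
  have hz1 : (1:ℝ) ≤ ‖z‖ := by linarith
  have hz0 : z ≠ 0 := by intro h; rw [h, norm_zero] at hz1; linarith
  have hzim : z ∉ Complex.ofReal '' Set.Icc A B := by
    rintro ⟨x, hx, rfl⟩
    have hx' := hxM x hx
    rw [Complex.norm_real, Real.norm_eq_abs] at hz
    linarith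
  have hne := hp_ne hzim
  have hcinv := hp_cont_inv hzim
  have hcQ : Continuous fun x : ℝ => Q.eval ((x:ℝ):ℂ) :=
    Q.continuous.comp Complex.continuous_ofReal
  -- integrability facts
  have hIJ : IntervalIntegrable
      (fun x => z * (Q.eval ((x:ℝ):ℂ) * ρ x) * ((x:ℝ):ℂ)^n / (((x:ℝ):ℂ) - z))
      volume A B := by
    have hg : ContinuousOn
        (fun x : ℝ => z * Q.eval ((x:ℝ):ℂ) * ((x:ℝ):ℂ)^n * (((x:ℝ):ℂ) - z)⁻¹)
        (Set.Icc A B) :=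
      (((continuous_const.mul hcQ).mul
        (Complex.continuous_ofReal.pow n)).continuousOn).mul hcinv
    have h := hp_integ hAB hρ hg
    have he : (fun x : ℝ => z * (Q.eval ((x:ℝ):ℂ) * ρ x) * ((x:ℝ):ℂ)^n / (((x:ℝ):ℂ) - z))
        = fun x : ℝ => (z * Q.eval ((x:ℝ):ℂ) * ((x:ℝ):ℂ)^n * (((x:ℝ):ℂ) - z)⁻¹) * ρ x := by
      funext x; ring
    rw [he]; exact h
  have hIk : ∀ k : ℕ, IntervalIntegrable
      (fun x => (Q.eval ((x:ℝ):ℂ) * ρ x) * ((x:ℝ):ℂ)^k) volume A B := by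
    intro k
    have h := hp_integ hAB hρ ((hcQ.mul (Complex.continuous_ofReal.pow k)).continuousOn)
    have he : (fun x : ℝ => (Q.eval ((x:ℝ):ℂ) * ρ x) * ((x:ℝ):ℂ)^k)
        = fun x : ℝ => (Q.eval ((x:ℝ):ℂ) * ((x:ℝ):ℂ)^k) * ρ x := by funext x; ring
    rw [he]; exact h
  have hIQρn : IntervalIntegrable
      (fun x => Q.eval ((x:ℝ):ℂ) * ρ x * ((x:ℝ):ℂ)^n) volume A B := hIk n
  -- orthogonality reformulated
  have horth' : ∀ k : ℕ, k < n →
      (∫ x in A..B, (Q.eval ((x:ℝ):ℂ) * ρ x) * ((x:ℝ):ℂ)^k) = 0 := by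
    intro k hk
    have he : (fun x : ℝ => (Q.eval ((x:ℝ):ℂ) * ρ x) * ((x:ℝ):ℂ)^k)
        = fun x : ℝ => Q.eval ((x:ℝ):ℂ) * ((x:ℝ):ℂ)^k * ρ x := by funext x; ring
    rw [he]; exact horth k hk
  -- the integral identity
  have hpt : ∀ x ∈ Set.uIcc A B,
      Q.eval ((x:ℝ):ℂ) * ρ x / (((x:ℝ):ℂ) - z)
        = (z^(n+1))⁻¹ * (z * (Q.eval ((x:ℝ):ℂ) * ρ x) * ((x:ℝ):ℂ)^n / (((x:ℝ):ℂ) - z))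
          - ∑ k ∈ range n, (z^(k+1))⁻¹ * ((Q.eval ((x:ℝ):ℂ) * ρ x) * ((x:ℝ):ℂ)^k) := by
    intro x hx
    have h1 : ((x:ℝ):ℂ) - z ≠ 0 := hne x (by rwa [Set.uIcc_of_le hAB] at hx)
    exact hp_key1 z hz0 n ((x:ℝ):ℂ) h1 (Q.eval ((x:ℝ):ℂ) * ρ x)
  have hInt : (∫ x in A..B, Q.eval ((x:ℝ):ℂ) * ρ x / (((x:ℝ):ℂ) - z))
      = (z^(n+1))⁻¹ *
        ∫ x in A..B, z * (Q.eval ((x:ℝ):ℂ) * ρ x) * ((x:ℝ):ℂ)^n / (((x:ℝ):ℂ) - z) := by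
    rw [intervalIntegral.integral_congr hpt]
    rw [intervalIntegral.integral_sub (hIJ.const_mul _)
      (hp_integ_sum _ (fun k _ => (hIk k).const_mul _))]
    rw [intervalIntegral.integral_const_mul]
    rw [intervalIntegral.integral_finset_sum (fun k _ => (hIk k).const_mul _)]
    have hzero : ∀ k ∈ range n,
        (∫ x in A..B, (z^(k+1))⁻¹ * ((Q.eval ((x:ℝ):ℂ) * ρ x) * ((x:ℝ):ℂ)^k)) = 0 := by
      intro k hk
      rw [intervalIntegral.integral_const_mul, horth' k (Finset.mem_range.mp hk), mul_zero]
    rw [Finset.sum_congr rfl hzero, Finset.sum_const_zero, sub_zero]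
  set J : ℂ := ∫ x in A..B, z * (Q.eval ((x:ℝ):ℂ) * ρ x) * ((x:ℝ):ℂ)^n / (((x:ℝ):ℂ) - z)
    with hJ
  have hRz : z^(n+1) * R z = c * J := by
    rw [hR z hzim, hInt]
    have hzn : z^(n+1) ≠ 0 := pow_ne_zero _ hz0
    field_simp
  rw [hRz, norm_mul]
  refine mul_le_mul_of_nonneg_left ?_ (norm_nonneg c)
  calc ‖J‖ ≤ ∫ x in A..B, ‖z * (Q.eval ((x:ℝ):ℂ) * ρ x) * ((x:ℝ):ℂ)^n / (((x:ℝ):ℂ) - z)‖ :=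
        intervalIntegral.norm_integral_le_integral_norm hAB
    _ ≤ ∫ x in A..B, 2 * ‖Q.eval ((x:ℝ):ℂ) * ρ x * ((x:ℝ):ℂ)^n‖ := by
        apply intervalIntegral.integral_mono_on hAB hIJ.norm (hIQρn.norm.const_mul 2)
        intro x hx
        have hxm := hxM x hx
        have hxn : ‖((x:ℝ):ℂ)‖ = |x| := by rw [Complex.norm_real, Real.norm_eq_abs]
        have hd : ‖z‖ - M ≤ ‖((x:ℝ):ℂ) - z‖ := by
          have h := norm_sub_norm_le z ((x:ℝ):ℂ)
          rw [norm_sub_rev] at h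
          rw [hxn] at h
          linarith
        have hdpos : (0:ℝ) < ‖((x:ℝ):ℂ) - z‖ := by linarith
        have hz2 : ‖z‖ ≤ 2 * ‖((x:ℝ):ℂ) - z‖ := by linarith
        rw [norm_div, norm_mul, norm_mul, div_le_iff₀ hdpos, norm_mul, norm_mul]
        have ht0 : (0:ℝ) ≤ ‖Q.eval ((x:ℝ):ℂ)‖ * ‖ρ x‖ * ‖((x:ℝ):ℂ)^n‖ :=
          mul_nonneg (mul_nonneg (norm_nonneg _) (norm_nonneg _)) (norm_nonneg _)
        rw [norm_mul]
        nlinarith [ht0, hz2]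

/-- Conversely, multiple orthogonality of `Q` implies the Hermite–Padé
interpolation conditions: the remainders `R_i` decay like `z^{-(n_i+1)}` at infinity and
agree with `Q·f_i − P_i` for suitable polynomials `P_i`. -/
theorem orthogonality_implies_hermitePade (p : ℕ) (hp : 1 ≤ p)
    (a b : Fin p → ℝ) (hab : ∀ i, a i < b i)
    (hdisj : ∀ i j, i ≠ j → Disjoint (Set.Icc (a i) (b i)) (Set.Icc (a j) (b j)))
    (ρ : Fin p → ℝ → ℂ)
    (hρ : ∀ i, IntervalIntegrable (ρ i) volume (a i) (b i))
    (f : Fin p → ℂ → ℂ)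
    (hf : ∀ i, ∀ z : ℂ, z ∉ Complex.ofReal '' Set.Icc (a i) (b i) →
      f i z = (2 * (Real.pi : ℂ) * Complex.I)⁻¹ * ∫ x in (a i)..(b i), ρ i x / ((x : ℂ) - z))
    (n : Fin p → ℕ)
    (Q : Polynomial ℂ)
    (horth : ∀ i, ∀ k : ℕ, k < n i →
      (∫ x in (a i)..(b i), Q.eval (x : ℂ) * (x : ℂ) ^ k * ρ i x) = 0)
    (R : Fin p → ℂ → ℂ)
    (hR : ∀ i, ∀ z : ℂ, z ∉ Complex.ofReal '' Set.Icc (a i) (b i) →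
      R i z = (2 * (Real.pi : ℂ) * Complex.I)⁻¹ *
        ∫ x in (a i)..(b i), Q.eval (x : ℂ) * ρ i x / ((x : ℂ) - z)) :
    ∀ i,
      (∃ C : ℝ, ∀ᶠ z in Bornology.cobounded ℂ, ‖z ^ (n i + 1) * R i z‖ ≤ C) ∧
      (∃ P : Polynomial ℂ, ∀ z : ℂ, z ∉ Complex.ofReal '' Set.Icc (a i) (b i) →
        R i z = Q.eval z * f i z - P.eval z) := by
  intro i
  constructor
  · exact hp_part1 (a i) (b i) (hab i).le (ρ i) (hρ i) Q (n i) (horth i) (R i) (hR i)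
  · obtain ⟨P, hP⟩ := hp_part2 (a i) (b i) (hab i).le (ρ i) (hρ i) Q
    exact ⟨P, fun z hz => by rw [hR i z hz, hf i z hz]; exact hP z hz⟩
end

section
/- Let c = (c_1,…,c_p) and, for each m, c^{(m)} = (c^{(m)}_1,…,c^{(m)}_p) be vectors of positive numbers with c^{(m)}_i → c_i for each i as m → ∞. Let ω ∈ M_c satisfy I[ω] < ∞, and for each m let ω^{(m)} be a minimizer of the vector energy I over M_{c^{(m)}}. Then limsup_{m→∞} I[ω^{(m)}] ≤ I[ω]. In particular, if ω minimizes I over M_c, then limsup_{m→∞} I[ω^{(m)}] ≤ I[ω]. -/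
open MeasureTheory Filter Topology

noncomputable section

/-- Mutual logarithmic energy `I[μ,ν] = −∫∫ log|z−t| dμ(t) dν(z)`, with values in
`(−∞, +∞]` (an `EReal`): the positive part of the kernel minus its negative part. -/
def mutualEnergy (μ ν : Measure ℝ) : EReal :=
  (ENNReal.toEReal (∫⁻ q : ℝ × ℝ, ENNReal.ofReal (-Real.log |q.2 - q.1|) ∂(ν.prod μ)))
    - (ENNReal.toEReal (∫⁻ q : ℝ × ℝ, ENNReal.ofReal (Real.log |q.2 - q.1|) ∂(ν.prod μ)))

/-- The vector energy `I[ν] = Σ_i ( 2 I[ν_i] + Σ_{k≠i} I[ν_i,ν_k] )`. -/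
def vecEnergy {p : ℕ} (ν : Fin p → Measure ℝ) : EReal :=
  ∑ i, ((2 : EReal) * mutualEnergy (ν i) (ν i) +
    ∑ k ∈ Finset.univ.erase i, mutualEnergy (ν i) (ν k))

/-- `ν ∈ M_c`: each `ν_i` is a positive measure supported in `[a_i,b_i]` of total mass `c_i`. -/
def InMclass {p : ℕ} (a b c : Fin p → ℝ) (ν : Fin p → Measure ℝ) : Prop :=
  ∀ i, ν i (Set.Icc (a i) (b i))ᶜ = 0 ∧ ν i Set.univ = ENNReal.ofReal (c i)

/-- `ω` minimizes the vector energy over the class `M_c`. -/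
def IsMinimizer {p : ℕ} (a b c : Fin p → ℝ) (ω : Fin p → Measure ℝ) : Prop :=
  InMclass a b c ω ∧ ∀ ν : Fin p → Measure ℝ, InMclass a b c ν → vecEnergy ω ≤ vecEnergy ν

/-- Logarithmic potential `V^μ(z) = −∫ log|z−t| dμ(t)` at a complex point. -/
def logPot (μ : Measure ℝ) (z : ℂ) : ℝ :=
  -∫ t, Real.log ‖z - (t : ℂ)‖ ∂μ

/-- Logarithmic potential at a real point. -/
def logPotR (μ : Measure ℝ) (x : ℝ) : ℝ :=
  -∫ t, Real.log |x - t| ∂μ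

/-- The (closed) support of a measure on `ℝ`. -/
def msupport (μ : Measure ℝ) : Set ℝ := {x : ℝ | ∀ U ∈ nhds x, 0 < μ U}

end

namespace LimsupMinAux

lemma enn_coe_eq (x : ENNReal) (hx : x ≠ ⊤) :
    (x : EReal) = ((x.toReal : ℝ) : EReal) := by
  rw [← EReal.toReal_coe_ennreal]
  refine (EReal.coe_toReal ?_ ?_).symm
  · simpa using hx
  · exact ((bot_lt_iff_ne_bot).1 (lt_of_lt_of_le (by simp : (⊥:EReal) < 0) (EReal.coe_ennreal_nonneg x)))

lemma two_mul_ereal (x : EReal) : (2 : EReal) * x = x + x := by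
  induction x using EReal.rec with
  | bot => rw [EReal.mul_bot_of_pos (by norm_num)]; simp
  | coe x =>
      have : (2 : EReal) = ((2 : ℝ) : EReal) := by norm_cast
      rw [this, ← EReal.coe_mul, ← EReal.coe_add, two_mul]
  | top => rw [EReal.mul_top_of_pos (by norm_num)]; simp

lemma coe_two_mul (x : ℝ) : (2 : EReal) * (x : EReal) = ((2 * x : ℝ) : EReal) := by
  rw [two_mul_ereal, ← EReal.coe_add, two_mul]

lemma coe_sum {ι : Type*} (s : Finset ι) (f : ι → ℝ) :
    ((∑ i ∈ s, f i : ℝ) : EReal) = ∑ i ∈ s, ((f i : ℝ) : EReal) :=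
  map_sum (⟨⟨Real.toEReal, EReal.coe_zero⟩, EReal.coe_add⟩ : ℝ →+ EReal) f s

lemma sub_add_sub (a c b d : ENNReal) (hb : b ≠ ⊤) (hd : d ≠ ⊤) :
    ((a : EReal) - (b : EReal)) + ((c : EReal) - (d : EReal))
      = ((a + c : ENNReal) : EReal) - ((b + d : ENNReal) : EReal) := by
  rw [enn_coe_eq b hb, enn_coe_eq d hd, enn_coe_eq (b + d) (ENNReal.add_ne_top.2 ⟨hb, hd⟩)]
  rw [sub_eq_add_neg, sub_eq_add_neg, sub_eq_add_neg, add_add_add_comm,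
    EReal.coe_ennreal_add, ENNReal.toReal_add hb hd, ← EReal.coe_neg, ← EReal.coe_neg,
    ← EReal.coe_neg, ← EReal.coe_add, neg_add]

lemma sum_sub {ι : Type*} (s : Finset ι) (f g : ι → ENNReal) (hg : ∀ i ∈ s, g i ≠ ⊤) :
    (∑ i ∈ s, (((f i) : EReal) - ((g i) : EReal)))
      = ((∑ i ∈ s, f i : ENNReal) : EReal) - ((∑ i ∈ s, g i : ENNReal) : EReal) := by
  induction s using Finset.cons_induction with
  | empty => simp
  | cons i s his ih =>
      rw [Finset.sum_cons, Finset.sum_cons, Finset.sum_cons,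
        ih (fun j hj => hg j (Finset.mem_cons_of_mem hj)),
        sub_add_sub _ _ _ _ (hg i (Finset.mem_cons_self i s))
          (ENNReal.sum_ne_top.2 (fun j hj => hg j (Finset.mem_cons_of_mem hj)))]

lemma ne_top_of_sub (x y : ENNReal) (hy : y ≠ ⊤) (h : ((x : EReal) - (y : EReal)) ≠ ⊤) :
    x ≠ ⊤ := by
  intro hx
  subst hx
  rw [EReal.coe_ennreal_top, enn_coe_eq y hy, EReal.top_sub_coe] at h
  exact h rfl

lemma prod_smul (μ ν : Measure ℝ) [IsFiniteMeasure μ] [IsFiniteMeasure ν] (s t : ENNReal)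
    (hs : s ≠ ⊤) (ht : t ≠ ⊤) : (s • μ).prod (t • ν) = (s * t) • (μ.prod ν) := by
  haveI : IsFiniteMeasure (s • μ) :=
    ⟨by rw [Measure.smul_apply, smul_eq_mul]; exact ENNReal.mul_lt_top hs.lt_top (measure_lt_top μ _)⟩
  haveI : IsFiniteMeasure (t • ν) :=
    ⟨by rw [Measure.smul_apply, smul_eq_mul]; exact ENNReal.mul_lt_top ht.lt_top (measure_lt_top ν _)⟩
  refine Measure.prod_eq ?_
  intro A B hA hB
  simp only [Measure.smul_apply, smul_eq_mul, Measure.prod_prod]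
  ring

lemma log_part_lt_top (μ ν : Measure ℝ) [IsFiniteMeasure μ] [IsFiniteMeasure ν]
    (s t : Set ℝ) (hs : μ sᶜ = 0) (ht : ν tᶜ = 0) (C : ℝ)
    (hb : ∀ x ∈ t, ∀ y ∈ s, Real.log |y - x| ≤ C) :
    ∫⁻ q : ℝ × ℝ, ENNReal.ofReal (Real.log |q.2 - q.1|) ∂(ν.prod μ) < ⊤ := by
  have hnull : (ν.prod μ) (t ×ˢ s)ᶜ = 0 := by
    have hsub : (t ×ˢ s)ᶜ ⊆ (tᶜ ×ˢ (Set.univ : Set ℝ)) ∪ ((Set.univ : Set ℝ) ×ˢ sᶜ) := by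
      intro q hq
      simp only [Set.mem_compl_iff, Set.mem_prod, Set.mem_union, Set.mem_univ, and_true,
        true_and, not_and_or] at *
      tauto
    refine measure_mono_null hsub (measure_union_null ?_ ?_) <;>
      simp [Measure.prod_prod, ht, hs]
  have hmem : ∀ᵐ q ∂(ν.prod μ), q ∈ t ×ˢ s := by
    rw [MeasureTheory.ae_iff]
    convert hnull using 2
    rfl
  have hae : ∀ᵐ q ∂(ν.prod μ),
      ENNReal.ofReal (Real.log |q.2 - q.1|) ≤ ENNReal.ofReal C := by
    filter_upwards [hmem] with q hq
    exact ENNReal.ofReal_le_ofReal (hb q.1 hq.1 q.2 hq.2)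
  calc ∫⁻ q : ℝ × ℝ, ENNReal.ofReal (Real.log |q.2 - q.1|) ∂(ν.prod μ)
      ≤ ∫⁻ _, ENNReal.ofReal C ∂(ν.prod μ) := lintegral_mono_ae hae
    _ = ENNReal.ofReal C * (ν.prod μ) Set.univ := lintegral_const _
    _ < ⊤ := ENNReal.mul_lt_top ENNReal.ofReal_lt_top (measure_lt_top _ _)


end LimsupMinAux

open LimsupMinAux

/-- Upper semicontinuity of the minimal vector energies with respect to the
mass vector: if `c^{(m)} → c` and `ω^{(m)}` minimizes over `M_{c^{(m)}}`, then
`limsup I[ω^{(m)}] ≤ I[ω]` for any `ω ∈ M_c` of finite energy. -/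
theorem limsup_minimal_energy_le (p : ℕ) (hp : 1 ≤ p)
    (a b : Fin p → ℝ) (hab : ∀ i, a i < b i)
    (hdisj : ∀ i j, i ≠ j → Disjoint (Set.Icc (a i) (b i)) (Set.Icc (a j) (b j)))
    (c : Fin p → ℝ) (hc : ∀ i, 0 < c i)
    (cm : ℕ → Fin p → ℝ) (hcm : ∀ m i, 0 < cm m i)
    (hconv : ∀ i, Tendsto (fun m => cm m i) atTop (𝓝 (c i)))
    (ω : Fin p → Measure ℝ) (hω : InMclass a b c ω) (hfin : vecEnergy ω < ⊤)
    (ωm : ℕ → Fin p → Measure ℝ) (hωm : ∀ m, IsMinimizer a b (cm m) (ωm m)) :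
    Filter.limsup (fun m => vecEnergy (ωm m)) atTop ≤ vecEnergy ω := by
  have hfinω : ∀ i, IsFiniteMeasure (ω i) := fun i =>
    ⟨by rw [(hω i).2]; exact ENNReal.ofReal_lt_top⟩
  -- bound on the kernel
  set D : ℝ := ∑ i, (|a i| + |b i|) with hD
  have hD0 : 0 ≤ D := Finset.sum_nonneg fun i _ => add_nonneg (abs_nonneg _) (abs_nonneg _)
  have habs : ∀ i, ∀ x ∈ Set.Icc (a i) (b i), |x| ≤ D := by
    intro i x hx
    have h1 : |x| ≤ |a i| + |b i| :=
      le_trans (abs_le_max_abs_abs hx.1 hx.2)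
        (max_le (le_add_of_nonneg_right (abs_nonneg _)) (le_add_of_nonneg_left (abs_nonneg _)))
    rw [hD]
    exact h1.trans (Finset.single_le_sum (f := fun j => |a j| + |b j|)
      (fun j _ => add_nonneg (abs_nonneg _) (abs_nonneg _)) (Finset.mem_univ i))
  set C : ℝ := Real.log (2 * D + 1) with hCdef
  have hC : ∀ i k : Fin p, ∀ x ∈ Set.Icc (a k) (b k), ∀ y ∈ Set.Icc (a i) (b i),
      Real.log |y - x| ≤ C := by
    intro i k x hx y hy
    have hsum : |y - x| ≤ 2 * D + 1 := by
      have h2 : |y - x| ≤ |y| + |x| := by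
        rw [sub_eq_add_neg]
        exact (abs_add_le y (-x)).trans_eq (by rw [abs_neg])
      have := habs k x hx
      have := habs i y hy
      linarith
    rcases eq_or_lt_of_le (abs_nonneg (y - x)) with h0 | h0
    · rw [← h0, Real.log_zero]
      exact Real.log_nonneg (by linarith)
    · exact Real.log_le_log h0 hsum
  -- named lintegrals
  set A : Fin p → Fin p → ENNReal := fun i k =>
    ∫⁻ q : ℝ × ℝ, ENNReal.ofReal (-Real.log |q.2 - q.1|) ∂((ω k).prod (ω i)) with hAdef
  set B : Fin p → Fin p → ENNReal := fun i k =>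
    ∫⁻ q : ℝ × ℝ, ENNReal.ofReal (Real.log |q.2 - q.1|) ∂((ω k).prod (ω i)) with hBdef
  have hme : ∀ i k, mutualEnergy (ω i) (ω k) = (A i k : EReal) - (B i k : EReal) := fun i k => rfl
  have hB : ∀ i k, B i k ≠ ⊤ := by
    intro i k
    haveI := hfinω i; haveI := hfinω k
    exact (log_part_lt_top (ω i) (ω k) (Set.Icc (a i) (b i)) (Set.Icc (a k) (b k))
      (hω i).1 (hω k).1 C (hC i k)).ne
  -- decomposition of the vector energy
  set F : Fin p → ENNReal := fun i => (A i i + A i i) + ∑ k ∈ Finset.univ.erase i, A i k with hF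
  set G : Fin p → ENNReal := fun i => (B i i + B i i) + ∑ k ∈ Finset.univ.erase i, B i k with hG
  have hGfin : ∀ i, G i ≠ ⊤ := fun i =>
    ENNReal.add_ne_top.2 ⟨ENNReal.add_ne_top.2 ⟨hB i i, hB i i⟩,
      ENNReal.sum_ne_top.2 fun k _ => hB i k⟩
  have hterm : ∀ i, (2 : EReal) * mutualEnergy (ω i) (ω i) +
      ∑ k ∈ Finset.univ.erase i, mutualEnergy (ω i) (ω k)
        = ((F i : ENNReal) : EReal) - ((G i : ENNReal) : EReal) := by
    intro i
    have h1 : ∑ k ∈ Finset.univ.erase i, mutualEnergy (ω i) (ω k)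
        = ((∑ k ∈ Finset.univ.erase i, A i k : ENNReal) : EReal)
          - ((∑ k ∈ Finset.univ.erase i, B i k : ENNReal) : EReal) := by
      rw [← sum_sub _ _ _ (fun k _ => hB i k)]
      exact Finset.sum_congr rfl fun k _ => hme i k
    rw [hme, two_mul_ereal, h1,
      sub_add_sub _ _ _ _ (hB i i) (hB i i),
      sub_add_sub _ _ _ _ (ENNReal.add_ne_top.2 ⟨hB i i, hB i i⟩)
        (ENNReal.sum_ne_top.2 fun k _ => hB i k)]
  have hdecomp : vecEnergy ω
      = ((∑ i, F i : ENNReal) : EReal) - ((∑ i, G i : ENNReal) : EReal) := by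
    unfold vecEnergy
    rw [Finset.sum_congr rfl fun i _ => hterm i, sum_sub _ _ _ (fun i _ => hGfin i)]
  -- finiteness of all A i k
  have hSA : (∑ i, F i) ≠ ⊤ := by
    refine ne_top_of_sub (∑ i, F i) (∑ i, G i) (ENNReal.sum_ne_top.2 fun i _ => hGfin i) ?_
    rw [← hdecomp]; exact hfin.ne
  have hFfin : ∀ i, F i ≠ ⊤ := fun i =>
    (ENNReal.sum_lt_top.1 hSA.lt_top i (Finset.mem_univ i)).ne
  have hAfin : ∀ i k, A i k ≠ ⊤ := by
    intro i k
    have h := hFfin i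
    rw [hF] at h
    simp only [ENNReal.add_ne_top, ENNReal.sum_ne_top] at h
    rcases eq_or_ne k i with rfl | hki
    · exact h.1.1
    · exact h.2 k (Finset.mem_erase.2 ⟨hki, Finset.mem_univ k⟩)
  -- real-valued energies
  set e : Fin p → Fin p → ℝ := fun i k => (A i k).toReal - (B i k).toReal with he
  have hmer : ∀ i k, mutualEnergy (ω i) (ω k) = ((e i k : ℝ) : EReal) := by
    intro i k
    rw [hme, enn_coe_eq _ (hAfin i k), enn_coe_eq _ (hB i k), ← EReal.coe_sub]
  -- the comparison measures
  set r : ℕ → Fin p → ℝ := fun m i => cm m i / c i with hr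
  have hrpos : ∀ m i, 0 < r m i := fun m i => div_pos (hcm m i) (hc i)
  set ν : ℕ → Fin p → Measure ℝ := fun m i => (ENNReal.ofReal (r m i)) • ω i with hν
  have hνM : ∀ m, InMclass a b (cm m) (ν m) := by
    intro m i
    constructor
    · simp only [hν, Measure.smul_apply, smul_eq_mul, (hω i).1, mul_zero]
    · rw [hν]
      simp only [Measure.smul_apply, smul_eq_mul, (hω i).2]
      rw [← ENNReal.ofReal_mul (hrpos m i).le, hr, div_mul_cancel₀ _ (hc i).ne']
  have hle : ∀ m, vecEnergy (ωm m) ≤ vecEnergy (ν m) := fun m => (hωm m).2 (ν m) (hνM m)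
  -- energy of the comparison measures
  have hsme : ∀ m i k, mutualEnergy (ν m i) (ν m k)
      = (((r m k * r m i) * e i k : ℝ) : EReal) := by
    intro m i k
    haveI := hfinω i; haveI := hfinω k
    have hp : ((ν m k).prod (ν m i))
        = (ENNReal.ofReal (r m k) * ENNReal.ofReal (r m i)) • ((ω k).prod (ω i)) :=
      prod_smul _ _ _ _ ENNReal.ofReal_ne_top ENNReal.ofReal_ne_top
    have hsfin : ENNReal.ofReal (r m k) * ENNReal.ofReal (r m i) ≠ ⊤ :=
      ENNReal.mul_ne_top ENNReal.ofReal_ne_top ENNReal.ofReal_ne_top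
    show ((∫⁻ q : ℝ × ℝ, ENNReal.ofReal (-Real.log |q.2 - q.1|) ∂((ν m k).prod (ν m i))
        : ENNReal) : EReal)
      - ((∫⁻ q : ℝ × ℝ, ENNReal.ofReal (Real.log |q.2 - q.1|) ∂((ν m k).prod (ν m i))
        : ENNReal) : EReal) = _
    rw [hp, lintegral_smul_measure, lintegral_smul_measure, smul_eq_mul, smul_eq_mul]
    rw [enn_coe_eq _ (ENNReal.mul_ne_top hsfin (hAfin i k)),
      enn_coe_eq _ (ENNReal.mul_ne_top hsfin (hB i k)), ← EReal.coe_sub]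
    congr 1
    simp only [ENNReal.toReal_mul]
    rw [ENNReal.toReal_ofReal (hrpos m k).le, ENNReal.toReal_ofReal (hrpos m i).le, he]
    ring
  set En : ℕ → ℝ := fun m => ∑ i, (2 * ((r m i * r m i) * e i i)
      + ∑ k ∈ Finset.univ.erase i, (r m k * r m i) * e i k) with hEn
  have hvν : ∀ m, vecEnergy (ν m) = ((En m : ℝ) : EReal) := by
    intro m
    rw [hEn]
    unfold vecEnergy
    rw [coe_sum]
    refine Finset.sum_congr rfl fun i _ => ?_
    rw [hsme m i i, coe_two_mul,
      show (∑ k ∈ Finset.univ.erase i, mutualEnergy (ν m i) (ν m k))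
          = ((∑ k ∈ Finset.univ.erase i, r m k * r m i * e i k : ℝ) : EReal) from by
        rw [coe_sum]; exact Finset.sum_congr rfl fun k _ => hsme m i k,
      ← EReal.coe_add]
  set Eω : ℝ := ∑ i, (2 * e i i + ∑ k ∈ Finset.univ.erase i, e i k) with hEω
  have hvω : vecEnergy ω = ((Eω : ℝ) : EReal) := by
    rw [hEω]
    unfold vecEnergy
    rw [coe_sum]
    refine Finset.sum_congr rfl fun i _ => ?_
    rw [hmer i i, coe_two_mul,
      show (∑ k ∈ Finset.univ.erase i, mutualEnergy (ω i) (ω k))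
          = ((∑ k ∈ Finset.univ.erase i, e i k : ℝ) : EReal) from by
        rw [coe_sum]; exact Finset.sum_congr rfl fun k _ => hmer i k,
      ← EReal.coe_add]
  -- convergence
  have hr1 : ∀ i, Tendsto (fun m => r m i) atTop (𝓝 1) := by
    intro i
    have := (hconv i).div tendsto_const_nhds (hc i).ne'
    rw [div_self (hc i).ne'] at this
    exact this
  have hEnT : Tendsto En atTop (𝓝 Eω) := by
    have h : Tendsto En atTop (𝓝 (∑ i : Fin p, (2 * (((1:ℝ) * 1) * e i i)
        + ∑ k ∈ Finset.univ.erase i, ((1:ℝ) * 1) * e i k))) := by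
      apply tendsto_finset_sum
      intro i _
      apply Tendsto.add
      · exact (((hr1 i).mul (hr1 i)).mul tendsto_const_nhds).const_mul 2
      · exact tendsto_finset_sum _ fun k _ => ((hr1 k).mul (hr1 i)).mul tendsto_const_nhds
    simpa [hEω] using h
  have hT : Tendsto (fun m => vecEnergy (ν m)) atTop (𝓝 (vecEnergy ω)) := by
    rw [hvω]
    simp only [hvν]
    exact EReal.tendsto_coe.2 hEnT
  calc Filter.limsup (fun m => vecEnergy (ωm m)) atTop
      ≤ Filter.limsup (fun m => vecEnergy (ν m)) atTop :=
        Filter.limsup_le_limsup (Filter.Eventually.of_forall hle)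
    _ = vecEnergy ω := hT.limsup_eq
end
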